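/- Let n ≥ 1, q = 2^n, and F_q the finite field with q elements. Let F, g ∈ F_q[X] be polynomials such that g(x)·F(x) = 0 for every x ∈ F_q. Then the polynomial G_F := ∏_{a ∈ F_q, a ≠ 0} gcd(F(X) − a, X^{q−1} − 1) divides g in F_q[X]; in particular g belongs to the ideal of F_q[X]/(X^{q−1} − 1) generated by G_F (i.e., any annihilator of F lies in the q-ary cyclic code of length q − 1 with generator polynomial G_F). -/

import Mathlib

open Polynomial

/-- If `g·F` vanishes at every point of `F_q` (`q = 2^n`), then the polynomial
`G_F = ∏_{a ≠ 0} gcd (F - a) (X^(q-1) - 1)` divides `g`; i.e. any annihilator of `F` lies in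
the `q`-ary cyclic code of length `q - 1` with generator polynomial `G_F`. -/
theorem generator_dvd_annihilator (n : ℕ) (hn : 1 ≤ n) (Fq : Type) [Field Fq] [Fintype Fq]
    [DecidableEq Fq] (hq : Fintype.card Fq = 2 ^ n) (F g : Polynomial Fq)
    (hann : ∀ x : Fq, g.eval x * F.eval x = 0) :
    (∏ a ∈ Finset.univ.erase (0 : Fq), gcd (F - C a) (X ^ (2 ^ n - 1) - 1)) ∣ g := by
  classical
  have hq1 : 1 ≤ 2 ^ n := Nat.one_le_two_pow
  set P : Polynomial Fq := X ^ (2 ^ n - 1) - 1 with hPdef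
  -- the cast of the exponent is nonzero
  have h0 : ((2 ^ n : ℕ) : Fq) = 0 := by rw [← hq]; exact FiniteField.cast_card_eq_zero Fq
  have hcast : ((2 ^ n - 1 : ℕ) : Fq) ≠ 0 := by
    have : ((2 ^ n - 1 : ℕ) : Fq) = -1 := by
      rw [Nat.cast_sub hq1, h0, Nat.cast_one, zero_sub]
    rw [this]
    exact neg_ne_zero.2 one_ne_zero
  have hPsep : P.Separable := by
    have := (X_pow_sub_one_separable_iff (F := Fq) (n := 2 ^ n - 1)).2 hcast
    simpa [hPdef] using this
  have hPne : P ≠ 0 := hPsep.ne_zero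
  have hPdeg : P.natDegree = 2 ^ n - 1 := by
    have : P = X ^ (2 ^ n - 1) - C 1 := by simp [hPdef]
    rw [this, natDegree_X_pow_sub_C]
  -- every nonzero element is a root of P
  have hroot : ∀ b : Fq, b ≠ 0 → P.eval b = 0 := by
    intro b hb
    have : b ^ (Fintype.card Fq - 1) = 1 := FiniteField.pow_card_sub_one_eq_one b hb
    rw [hq] at this
    simp [hPdef, this]
  -- P splits
  have hle : (Finset.univ.erase (0 : Fq)).val ≤ P.roots := by
    rw [← Multiset.prod_X_sub_C_dvd_iff_le_roots hPne]
    have : ((Finset.univ.erase (0 : Fq)).val.map fun a => X - C a).prod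
        = ∏ b ∈ Finset.univ.erase (0 : Fq), (X - C b) := rfl
    rw [this]
    refine Finset.prod_dvd_of_coprime (fun a _ b _ hab => ?_) (fun b hb => ?_)
    · exact pairwise_coprime_X_sub_C Function.injective_id hab
    · exact dvd_iff_isRoot.2 (hroot b (Finset.mem_erase.1 hb).1)
  have hPsplits : P.Splits := by
    rw [splits_iff_card_roots]
    refine le_antisymm (card_roots' P) ?_
    calc P.natDegree = Multiset.card (Finset.univ.erase (0 : Fq)).val := by
          rw [hPdeg, ← Finset.card_def, Finset.card_erase_of_mem (Finset.mem_univ _),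
            Finset.card_univ, hq]
      _ ≤ Multiset.card P.roots := Multiset.card_le_card hle
  -- the product of gcds divides P
  set PP : Polynomial Fq := ∏ a ∈ Finset.univ.erase (0 : Fq), gcd (F - C a) P with hPPdef
  have hcop : ((Finset.univ.erase (0 : Fq)) : Set Fq).Pairwise
      (Function.onFun IsCoprime fun a => gcd (F - C a) P) := by
    intro a _ b _ hab
    have hcp : IsCoprime (F - C a) (F - C b) := by
      refine ⟨C ((b - a)⁻¹), -C ((b - a)⁻¹), ?_⟩
      have hba : (b - a) ≠ 0 := sub_ne_zero.2 (Ne.symm hab)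
      have : C ((b - a)⁻¹) * (F - C a) + -C ((b - a)⁻¹) * (F - C b)
          = C ((b - a)⁻¹) * C (b - a) := by rw [C_sub]; ring
      rw [this, ← C_mul, inv_mul_cancel₀ hba, C_1]
    exact (hcp.of_isCoprime_of_dvd_left (gcd_dvd_left _ _)).of_isCoprime_of_dvd_right
      (gcd_dvd_left _ _)
  have hPPP : PP ∣ P := Finset.prod_dvd_of_coprime hcop (fun a _ => gcd_dvd_right _ _)
  have hPPne : PP ≠ 0 := fun h => hPne (by simpa [h] using hPPP)
  have hPPsplits : PP.Splits := hPsplits.of_dvd hPne hPPP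
  have hPPsep : PP.Separable := hPsep.of_dvd hPPP
  -- every root of PP is a root of g
  have hgroot : ∀ b ∈ PP.roots, g.eval b = 0 := by
    intro b hb
    have hb0 : PP.eval b = 0 := (isRoot_of_mem_roots hb)
    rw [hPPdef, eval_prod, Finset.prod_eq_zero_iff] at hb0
    obtain ⟨a, ha, hga⟩ := hb0
    have hFa : (F - C a).eval b = 0 :=
      (IsRoot.dvd hga (gcd_dvd_left _ _) : (F - C a).IsRoot b)
    have hFb : F.eval b = a := by
      have := hFa
      simp only [eval_sub, eval_C, sub_eq_zero] at this
      exact this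
    have ha0 : a ≠ 0 := (Finset.mem_erase.1 ha).1
    have := hann b
    rw [hFb] at this
    rcases mul_eq_zero.1 this with h | h
    · exact h
    · exact absurd h ha0
  rcases eq_or_ne g 0 with rfl | hg
  · exact dvd_zero _
  refine hPPsplits.dvd_of_roots_le_roots hPPne ?_
  refine Multiset.le_iff_count.2 fun b => ?_
  by_cases hb : b ∈ PP.roots
  · have h1 : PP.roots.count b ≤ 1 := (Multiset.nodup_iff_count_le_one.1 (nodup_roots hPPsep)) b
    have h2 : 1 ≤ g.roots.count b := by
      rw [count_roots]
      exact (rootMultiplicity_pos hg).2 (hgroot b hb)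
    omega
  · simp [Multiset.count_eq_zero_of_notMem hb]
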